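/- Let a, b > 0 and let γ : [0,∞) → ℝ be continuously differentiable with γ(0) ∈ (−a, b). Define W(γ) as the asymmetric barrier Lyapunov function ((1−q(γ))/2) ln(a²/(a²−γ²)) + (q(γ)/2) ln(b²/(b²−γ²)). If along the trajectory d/dt W(γ(t)) ≤ 0 whenever γ(t) ∈ (−a,b), then γ(t) ∈ (−a, b) for all t ≥ 0. -/

import Mathlib

open Real Set

/-- Key step: a trajectory that stays in `(-a,b)` on `[0,T)` cannot hit the
upper barrier `b` at time `T`, if `W` is nonincreasing along it. -/
lemma barrier_key (a b : ℝ) (hb : 0 < b) (W : ℝ → ℝ)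
    (hWpos : ∀ x, 0 < x → W x = 1 / 2 * Real.log (b ^ 2 / (b ^ 2 - x ^ 2)))
    (γ : ℝ → ℝ) (hγ : ContDiff ℝ 1 γ)
    (T : ℝ) (hT : 0 < T)
    (hin : ∀ t, t ∈ Set.Ico 0 T → γ t ∈ Set.Ioo (-a) b)
    (hTb : γ T = b)
    (hdecr : ∀ t, 0 ≤ t → γ t ∈ Set.Ioo (-a) b → deriv (fun s => W (γ s)) t ≤ 0) :
    False := by
  have hcont : Continuous γ := hγ.continuous
  -- near T, γ > b/2
  have h1 : ∀ᶠ t in nhds T, b / 2 < γ t := by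
    have : Filter.Tendsto γ (nhds T) (nhds b) := hTb ▸ hcont.tendsto T
    exact this.eventually_const_lt (by linarith)
  obtain ⟨δ, hδpos, hδ⟩ := Metric.eventually_nhds_iff.mp h1
  set t1 : ℝ := max 0 (T - δ / 2) with ht1def
  have ht10 : (0:ℝ) ≤ t1 := le_max_left _ _
  have ht1T : t1 < T := max_lt hT (by linarith)
  have ht1near : T - δ / 2 ≤ t1 := le_max_right _ _
  -- on [t1, T), γ is in (b/2, b)
  have hmid : ∀ s, s ∈ Set.Ico t1 T → b / 2 < γ s ∧ γ s < b ∧ 0 < b ^ 2 - (γ s) ^ 2 := by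
    intro s hs
    have hs0 : s ∈ Set.Ico 0 T := ⟨le_trans ht10 hs.1, hs.2⟩
    have hγs := hin s hs0
    have hdist : dist s T < δ := by
      rw [Real.dist_eq, abs_of_nonpos (by linarith [hs.2.le])]
      linarith [hs.1, hs.2]
    have hgt := hδ hdist
    refine ⟨hgt, hγs.2, by nlinarith [hγs.2]⟩
  set φ : ℝ → ℝ := fun s => 1 / 2 * (Real.log (b ^ 2) - Real.log (b ^ 2 - (γ s) ^ 2)) with hφdef
  have hb2ne : (b:ℝ) ^ 2 ≠ 0 := by positivity
  have heq : ∀ s ∈ Set.Ico t1 T, W (γ s) = φ s := by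
    intro s hs
    obtain ⟨h2, h3, h4⟩ := hmid s hs
    rw [hWpos (γ s) (by linarith), Real.log_div hb2ne (ne_of_gt h4)]
  have hφdiff : ∀ s, b ^ 2 - (γ s) ^ 2 ≠ 0 → DifferentiableAt ℝ φ s := by
    intro s hne
    have hinner : DifferentiableAt ℝ (fun u => b ^ 2 - (γ u) ^ 2) s :=
      (differentiableAt_const _).sub (((hγ.differentiable one_ne_zero) s).pow 2)
    have hlog : DifferentiableAt ℝ (fun u => Real.log (b ^ 2 - (γ u) ^ 2)) s :=
      hinner.log hne
    exact (differentiableAt_const _).sub hlog |>.const_mul _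
  -- f := W ∘ γ is antitone on [t1, T)
  have hant : AntitoneOn (fun s => W (γ s)) (Set.Ico t1 T) := by
    apply antitoneOn_of_deriv_nonpos (convex_Ico t1 T)
    · apply ContinuousOn.congr (f := φ)
      · intro s hs
        exact (hφdiff s (ne_of_gt (hmid s hs).2.2)).continuousAt.continuousWithinAt
      · intro s hs; exact heq s hs
    · rw [interior_Ico]
      intro s hs
      have hsIco : s ∈ Set.Ico t1 T := ⟨hs.1.le, hs.2⟩
      have hev : (fun u => W (γ u)) =ᶠ[nhds s] φ := by
        filter_upwards [Ioo_mem_nhds hs.1 hs.2] with u hu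
        exact heq u ⟨hu.1.le, hu.2⟩
      exact ((hφdiff s (ne_of_gt (hmid s hsIco).2.2)).congr_of_eventuallyEq hev).differentiableWithinAt
    · rw [interior_Ico]
      intro s hs
      have hsIco : s ∈ Set.Ico 0 T := ⟨le_trans ht10 hs.1.le, hs.2⟩
      exact hdecr s hsIco.1 (hin s hsIco)
  set C : ℝ := W (γ t1) with hCdef
  -- find t near T where b² - γ t ² is very small
  set M : ℝ := Real.exp (Real.log (b ^ 2) - 2 * C) with hMdef
  have hMpos : 0 < M := Real.exp_pos _
  have htend : Filter.Tendsto (fun t => b ^ 2 - (γ t) ^ 2) (nhds T) (nhds 0) := by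
    have : Filter.Tendsto (fun t => b ^ 2 - (γ t) ^ 2) (nhds T) (nhds (b ^ 2 - (γ T) ^ 2)) :=
      (continuous_const.sub (hcont.pow 2)).continuousAt
    simpa [hTb] using this
  have h2 : ∀ᶠ t in nhds T, b ^ 2 - (γ t) ^ 2 < M := htend.eventually_lt_const hMpos
  obtain ⟨η, hηpos, hη⟩ := Metric.eventually_nhds_iff.mp h2
  set t2 : ℝ := max t1 (T - η / 2) with ht2def
  have ht2T : t2 < T := max_lt ht1T (by linarith)
  have ht12 : t1 ≤ t2 := le_max_left _ _
  have ht2Ico : t2 ∈ Set.Ico t1 T := ⟨ht12, ht2T⟩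
  have hdist2 : dist t2 T < η := by
    rw [Real.dist_eq, abs_of_nonpos (by linarith)]
    have : T - η / 2 ≤ t2 := le_max_right _ _
    linarith
  have hsmall := hη hdist2
  obtain ⟨_, _, h4⟩ := hmid t2 ht2Ico
  -- antitonicity gives W (γ t2) ≤ C
  have hle : W (γ t2) ≤ C := hant ⟨le_rfl, ht1T⟩ ht2Ico ht12
  -- but W (γ t2) > C
  have hloglt : Real.log (b ^ 2 - (γ t2) ^ 2) < Real.log (b ^ 2) - 2 * C := by
    have := Real.log_lt_log h4 hsmall
    rwa [hMdef, Real.log_exp] at this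
  have : W (γ t2) = φ t2 := heq t2 ht2Ico
  rw [this] at hle
  rw [hφdef] at hle
  simp only at hle
  linarith

/-- Barrier-Lyapunov invariance: if the barrier function is nonincreasing along a C¹
trajectory starting in (−a,b), the trajectory stays in (−a,b) for all t ≥ 0. -/
theorem barrier_invariance (a b : ℝ) (ha : 0 < a) (hb : 0 < b)
    (q : ℝ → ℝ) (hq : ∀ x, q x = if 0 < x then 1 else 0)
    (W : ℝ → ℝ)
    (hW : ∀ x, W x = (1 - q x) / 2 * Real.log (a ^ 2 / (a ^ 2 - x ^ 2))
        + q x / 2 * Real.log (b ^ 2 / (b ^ 2 - x ^ 2)))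
    (γ : ℝ → ℝ) (hγ : ContDiff ℝ 1 γ)
    (h0 : γ 0 ∈ Set.Ioo (-a) b)
    (hdecr : ∀ t, 0 ≤ t → γ t ∈ Set.Ioo (-a) b → deriv (fun s => W (γ s)) t ≤ 0) :
    ∀ t, 0 ≤ t → γ t ∈ Set.Ioo (-a) b := by
  by_contra hcon
  push_neg at hcon
  obtain ⟨tbad, htbad0, htbad⟩ := hcon
  have hcont : Continuous γ := hγ.continuous
  set E : Set ℝ := {t | 0 ≤ t ∧ γ t ∉ Set.Ioo (-a) b} with hEdef
  have hEclosed : IsClosed E := by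
    have : E = Set.Ici 0 ∩ γ ⁻¹' (Set.Ioo (-a) b)ᶜ := by
      ext t; simp [hEdef, Set.mem_Ici, and_comm]
    rw [this]
    exact isClosed_Ici.inter (isOpen_Ioo.isClosed_compl.preimage hcont)
  have hEne : E.Nonempty := ⟨tbad, htbad0, htbad⟩
  have hEbdd : BddBelow E := ⟨0, fun t ht => ht.1⟩
  set T : ℝ := sInf E with hTdef
  have hTE : T ∈ E := hEclosed.csInf_mem hEne hEbdd
  have hT0 : 0 ≤ T := hTE.1
  have hTnot : γ T ∉ Set.Ioo (-a) b := hTE.2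
  have hTpos : 0 < T := by
    rcases lt_or_eq_of_le hT0 with h | h
    · exact h
    · exact absurd (h ▸ h0) hTnot
  have hin : ∀ t, t ∈ Set.Ico 0 T → γ t ∈ Set.Ioo (-a) b := by
    intro t ht
    by_contra hnot
    exact absurd (csInf_le hEbdd ⟨ht.1, hnot⟩) (not_le.mpr ht.2)
  -- γ T ∈ Icc (-a) b
  have hIcc : γ T ∈ Set.Icc (-a) b := by
    have htend : Filter.Tendsto γ (nhdsWithin T (Set.Iio T)) (nhds (γ T)) :=
      (hcont.continuousAt).continuousWithinAt.tendsto
    apply IsClosed.mem_of_tendsto isClosed_Icc htend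
    have hmem : Set.Ioo 0 T ∈ nhdsWithin T (Set.Iio T) := by
      rw [mem_nhdsWithin]
      exact ⟨Set.Ioi 0, isOpen_Ioi, hTpos, by
        intro x hx
        exact ⟨hx.1, hx.2⟩⟩
    filter_upwards [hmem] with t ht
    exact Set.Ioo_subset_Icc_self (hin t ⟨ht.1.le, ht.2⟩)
  have hWpos : ∀ x, 0 < x → W x = 1 / 2 * Real.log (b ^ 2 / (b ^ 2 - x ^ 2)) := by
    intro x hx
    rw [hW, hq, if_pos hx]; ring
  have hWneg : ∀ x, 0 < x → W (-x) = 1 / 2 * Real.log (a ^ 2 / (a ^ 2 - x ^ 2)) := by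
    intro x hx
    rw [hW, hq, if_neg (by linarith), neg_pow, neg_pow]
    ring_nf
  -- boundary cases
  rcases eq_or_lt_of_le hIcc.2 with hcase | hlt
  · -- γ T = b
    exact barrier_key a b hb W hWpos γ hγ T hTpos hin hcase hdecr
  · have hcase : γ T = -a := by
      rcases eq_or_lt_of_le hIcc.1 with h | h
      · exact h.symm
      · exact absurd ⟨h, hlt⟩ hTnot
    -- reduce to the upper-barrier case via x ↦ -x
    have hfun : (fun s => W (-(-γ s))) = fun s => W (γ s) := by
      funext s; rw [neg_neg]
    apply barrier_key b a ha (fun x => W (-x)) hWneg (fun t => -γ t) hγ.neg T hTpos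
    · intro t ht
      have := hin t ht
      exact ⟨by simpa using neg_lt_neg this.2, by simpa using neg_lt_neg this.1⟩
    · rw [hcase]; ring
    · intro t ht hmem
      have hmem' : γ t ∈ Set.Ioo (-a) b := by
        constructor
        · have := hmem.2; linarith
        · have := hmem.1; linarith
      have := hdecr t ht hmem'
      simpa [hfun] using this
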